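/- Let b ∈ ℂ, b ≠ 0, let h : ℂ → ℂ be entire, and define f(t) = h(t²). Then for every integer k ≥ 1, h^{(k)}(b²)/k! = Σ_{j=1}^{k} (−1)^{k−j} · j · (2k−j−1)! / ((2b)^{2k−j} · k! · (k−j)!) · f^{(j)}(b)/j!. Moreover h(b²) = f(b). -/

import Mathlib

open Complex Finset


noncomputable def Ac (j m : ℕ) : ℂ :=
  if m ≤ j then (j.factorial : ℂ) * (m.choose (j - m) : ℂ) * (2:ℂ) ^ ((2*(m:ℤ)) - (j:ℤ)) / (m.factorial : ℂ)
  else 0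

lemma Ac_zero (j : ℕ) (hj : 1 ≤ j) : Ac j 0 = 0 := by
  simp only [Ac, Nat.sub_zero, if_pos (Nat.zero_le j)]
  rw [Nat.choose_eq_zero_of_lt hj]
  simp

lemma Ac_gt (j m : ℕ) (hm : j < m) : Ac j m = 0 := by
  simp [Ac, Nat.not_le.mpr hm]

lemma Ac_rec (j m : ℕ) (hm : m ≤ j) :
    Ac (j+1) (m+1) = ((2*((m:ℤ)+1) - (j:ℤ) : ℤ) : ℂ) * Ac j (m+1) + 2 * Ac j m := by
  rcases eq_or_lt_of_le hm with rfl | hmj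
  · -- m = j
    rw [Ac_gt m (m+1) (by omega)]
    simp only [Ac, if_pos (le_refl _), if_pos (Nat.le_of_lt (Nat.lt_succ_self m))]
    rw [show m + 1 - (m+1) = 0 by omega, show m - m = 0 by omega]
    simp only [Nat.choose_zero_right, Nat.cast_one, mul_one, mul_zero, zero_add]
    have hfne : ((m+1).factorial : ℂ) ≠ 0 := by exact_mod_cast (m+1).factorial_ne_zero
    have hfne' : ((m).factorial : ℂ) ≠ 0 := by exact_mod_cast (m).factorial_ne_zero
    have hpow : (2:ℂ) ^ (2*((m:ℤ)+1) - ((m:ℤ)+1)) = 2 * (2:ℂ) ^ (2*(m:ℤ) - (m:ℤ)) := by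
      rw [show 2*((m:ℤ)+1) - ((m:ℤ)+1) = (2*(m:ℤ) - (m:ℤ)) + 1 by ring, zpow_add_one₀ (by norm_num)]
      ring
    have hfs : ((m+1).factorial : ℂ) = ((m:ℂ)+1) * (m.factorial : ℂ) := by
      rw [Nat.factorial_succ]; push_cast; ring
    rw [mul_div_cancel_left₀ _ hfne, mul_div_cancel_left₀ _ hfne']
    push_cast
    rw [hpow]
  · -- m + 1 ≤ j
    have h1 : m + 1 ≤ j + 1 := by omega
    simp only [Ac, if_pos h1, if_pos (show m+1 ≤ j from hmj), if_pos hm]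
    set q := j - m with hq
    have hq1 : 1 ≤ q := by omega
    have hjq : j = m + q := by omega
    rw [show j + 1 - (m+1) = q by omega, show j - (m+1) = q - 1 by omega]
    -- choose identities
    have hcs1 : (m+1).choose q * q = (m+1).choose (q-1) * (m + 2 - q) := by
      have := Nat.choose_succ_right_eq (m+1) (q-1)
      rwa [show q - 1 + 1 = q by omega, show m + 1 - (q - 1) = m + 2 - q by omega] at this
    have hcs2 : (m+1) * m.choose q = (m+1).choose q * (m + 1 - q) := by
      have h2 := Nat.choose_succ_right_eq (m+1) q
      have h3 := Nat.add_one_mul_choose_eq m q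
      omega
    -- goal over ℂ
    have hfne : ((m+1).factorial : ℂ) ≠ 0 := by exact_mod_cast (m+1).factorial_ne_zero
    have hfne' : ((m).factorial : ℂ) ≠ 0 := by exact_mod_cast (m).factorial_ne_zero
    have hfs : ((m+1).factorial : ℂ) = ((m:ℂ)+1) * (m.factorial : ℂ) := by
      rw [Nat.factorial_succ]; push_cast; ring
    have hfj : ((j+1).factorial : ℂ) = ((j:ℂ)+1) * (j.factorial : ℂ) := by
      rw [Nat.factorial_succ]; push_cast; ring
    have hp1 : (2:ℂ) ^ (2*((m:ℤ)+1) - ((j:ℤ)+1)) = 2 * (2:ℂ) ^ (2*(m:ℤ) - (j:ℤ)) := by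
      rw [show 2*((m:ℤ)+1) - ((j:ℤ)+1) = (2*(m:ℤ) - (j:ℤ)) + 1 by ring, zpow_add_one₀ (by norm_num)]
      ring
    have hp2 : (2:ℂ) ^ (2*((m:ℤ)+1) - (j:ℤ)) = 2 * 2 * (2:ℂ) ^ (2*(m:ℤ) - (j:ℤ)) := by
      rw [show 2*((m:ℤ)+1) - (j:ℤ) = (2*(m:ℤ) - (j:ℤ)) + 1 + 1 by ring, zpow_add_one₀ (by norm_num),
        zpow_add_one₀ (by norm_num)]
      ring
    push_cast
    rw [hp1, hp2, hfs, hfj]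
    rcases le_or_gt q (m+1) with hqle | hqgt
    · -- main case
      have hc1 : ((m+1).choose q : ℂ) * q = ((m+1).choose (q-1) : ℂ) * ((m:ℂ) + 2 - q) := by
        have := congrArg (Nat.cast : ℕ → ℂ) hcs1
        push_cast [Nat.cast_sub (show q ≤ m + 2 by omega)] at this
        convert this using 2 <;> push_cast <;> ring
      have hc2 : ((m:ℂ)+1) * (m.choose q : ℂ) = ((m+1).choose q : ℂ) * ((m:ℂ) + 1 - q) := by
        have := congrArg (Nat.cast : ℕ → ℂ) hcs2
        push_cast [Nat.cast_sub (show q ≤ m + 1 by omega)] at this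
        convert this using 2 <;> push_cast <;> ring
      have hz : (2:ℂ) ^ (2*(m:ℤ) - (j:ℤ)) ≠ 0 := by
        exact zpow_ne_zero _ (by norm_num)
      have hm1 : ((m:ℂ)+1) ≠ 0 := by
        have : ((m+1:ℕ):ℂ) ≠ 0 := Nat.cast_ne_zero.mpr (Nat.succ_ne_zero m)
        push_cast at this; exact this
      have hkey : ((j:ℂ)+1) * (((m+1).choose q : ℕ) : ℂ)
          = 2*(2*((m:ℂ)+1) - (j:ℂ)) * (((m+1).choose (q-1) : ℕ):ℂ) + ((m:ℂ)+1) * ((m.choose q : ℕ):ℂ) := by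
        have hjc : (j:ℂ) = (m:ℂ) + (q:ℂ) := by
          rw [hjq]; push_cast; ring
        rw [hjc]
        linear_combination 2*hc1 - hc2
      have hv : ((m:ℂ)+1) * ((m:ℂ)+1)⁻¹ = 1 := mul_inv_cancel₀ hm1
      simp only [div_eq_mul_inv, mul_inv]
      linear_combination (2*(j.factorial:ℂ)*(2:ℂ)^(2*(m:ℤ)-(j:ℤ)) * ((m:ℂ)+1)⁻¹ * ((m.factorial:ℂ))⁻¹) * hkey
        + (2*(j.factorial:ℂ)*(2:ℂ)^(2*(m:ℤ)-(j:ℤ)) * ((m.choose q:ℕ):ℂ) * ((m.factorial:ℂ))⁻¹) * hv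
    · -- q ≥ m+2 : all chooses vanish except possibly middle with zero factor
      have hz1 : (m+1).choose q = 0 := Nat.choose_eq_zero_of_lt (by omega)
      have hz3 : m.choose q = 0 := Nat.choose_eq_zero_of_lt (by omega)
      rw [hz1, hz3]
      rcases eq_or_lt_of_le (Nat.succ_le_of_lt hqgt) with heq | hqgt2
      · -- q = m + 2: factor 2(m+1) - j = 0
        have hz0 : 2*((m:ℂ)+1) - (j:ℂ) = 0 := by
          have hj2 : j = 2*m+2 := by omega
          rw [hj2]; push_cast; ring
        rw [hz0]
        simp
      · have hz2 : (m+1).choose (q-1) = 0 := Nat.choose_eq_zero_of_lt (by omega)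
        rw [hz2]
        simp


lemma lemV : ∀ a c d : ℕ,
    ∑ r ∈ range (c+1), ((-1:ℂ))^r * (a.choose r : ℂ) * ((a + d - r).choose (c - r) : ℂ)
      = (d.choose c : ℂ) := by
  intro a
  induction a with
  | zero =>
    intro c d
    rw [Finset.sum_eq_single 0]
    · simp
    · intro r hr hr0
      obtain ⟨s, rfl⟩ := Nat.exists_eq_succ_of_ne_zero hr0
      simp [Nat.choose_eq_zero_of_lt (Nat.succ_pos s)]
    · simp
  | succ a ih =>
    intro c d
    cases c with
    | zero => simp
    | succ c =>
      rw [Finset.sum_range_succ']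
      have hterm : ∀ x ∈ range (c+1),
          ((-1:ℂ))^(x+1) * ((a+1).choose (x+1) : ℂ) * ((a + 1 + d - (x+1)).choose (c + 1 - (x+1)) : ℂ)
          = ((-1:ℂ))^(x+1) * ((a).choose (x+1) : ℂ) * ((a + (d+1) - (x+1)).choose (c + 1 - (x+1)) : ℂ)
            + (-1) * (((-1:ℂ))^x * ((a).choose x : ℂ) * ((a + d - x).choose (c - x) : ℂ)) := by
        intro x hx
        have h1 : a + 1 + d - (x+1) = a + d - x := by omega
        have h2 : a + (d+1) - (x+1) = a + d - x := by omega
        have h3 : c + 1 - (x+1) = c - x := by omega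
        rw [h1, h2, h3, Nat.choose_succ_succ]
        push_cast
        ring
      rw [Finset.sum_congr rfl hterm, Finset.sum_add_distrib, ← Finset.mul_sum, ih c d]
      have big := ih (c+1) (d+1)
      rw [Finset.sum_range_succ'] at big
      have pascal : (((d+1).choose (c+1) : ℕ) : ℂ) = (d.choose c : ℂ) + (d.choose (c+1) : ℂ) := by
        rw [Nat.choose_succ_succ]; push_cast; ring
      rw [pascal] at big
      have hco : a + 1 + d - 0 = a + (d+1) - 0 := by omega
      rw [hco]
      simp only [Nat.choose_zero_right, Nat.cast_one, pow_zero, one_mul] at big ⊢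
      linear_combination big

lemma key1 (k m : ℕ) (hm : 1 ≤ m) (hmk : m ≤ k) :
    ∑ j ∈ Icc m k, ((-1:ℂ))^(k-j) * (j:ℂ) * ((2*k-j-1).factorial : ℂ) * ((m.choose (j-m)) : ℂ)
        / ((k-j).factorial : ℂ)
      = if m = k then ((k.factorial : ℕ) : ℂ) else 0 := by
  obtain ⟨n, rfl⟩ := Nat.exists_eq_add_of_le hmk
  cases n with
  | zero =>
    simp only [Nat.add_zero, Finset.Icc_self, Finset.sum_singleton, if_pos rfl]
    rw [show m - m = 0 by omega, show 2*m - m - 1 = m - 1 by omega]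
    simp only [pow_zero, one_mul, Nat.choose_zero_right, Nat.cast_one, mul_one,
      Nat.factorial_zero, div_one]
    rw [← Nat.mul_factorial_pred (by omega : m ≠ 0)]
    push_cast
    ring
  | succ n' =>
    set n := n' + 1 with hn
    have hn1 : 1 ≤ n := by omega
    rw [if_neg (by omega)]
    -- reindex
    rw [← Finset.Ico_add_one_right_eq_Icc, Finset.sum_Ico_eq_sum_range]
    have hrange : m + n + 1 - m = n + 1 := by omega
    rw [hrange]
    have hterm : ∀ r ∈ range (n+1),
        ((-1:ℂ))^(m + n - (m + r)) * ((m + r : ℕ):ℂ) * ((2*(m+n) - (m+r) - 1).factorial : ℂ)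
            * ((m.choose ((m+r) - m)) : ℂ) / (((m+n) - (m+r)).factorial : ℂ)
        = (((m+n-1).factorial : ℕ) : ℂ) * ((-1:ℂ))^n *
            ( ((-1:ℂ))^r * ((m:ℂ) + r) * (m.choose r : ℂ) * ((m + (2*n-1) - r).choose (n - r) : ℂ) ) := by
      intro r hr
      have hrn : r ≤ n := by simpa [Nat.lt_succ_iff] using hr
      have e1 : m + n - (m + r) = n - r := by omega
      have e2 : 2*(m+n) - (m+r) - 1 = m + (2*n-1) - r + (n - r) - (n-r) := by omega
      have e3 : (m+r) - m = r := by omega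
      rw [e1, e3]
      have hfact : ((2*(m+n) - (m+r) - 1).factorial : ℕ)
          = (m + (2*n-1) - r).choose (n - r) * (n-r).factorial * (m+n-1).factorial := by
        have hNe : 2*(m+n) - (m+r) - 1 = m + (2*n-1) - r := by omega
        rw [hNe, ← Nat.choose_mul_factorial_mul_factorial (show n - r ≤ m + (2*n-1) - r by omega)]
        congr 2
        omega
      rw [hfact]
      have hsign : ((-1:ℂ))^(n - r) = ((-1:ℂ))^n * ((-1:ℂ))^r := by
        rw [← pow_add, show n + r = (n - r) + 2*r by omega, pow_add, pow_mul]
        norm_num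
      have hne : (((n-r).factorial : ℕ) : ℂ) ≠ 0 := by exact_mod_cast (n-r).factorial_ne_zero
      field_simp [hsign]
      push_cast
      rw [hsign]
      ring
    rw [Finset.sum_congr rfl hterm, ← Finset.mul_sum]
    -- inner sum vanishes
    have hsplit : ∀ r ∈ range (n+1),
        ((-1:ℂ))^r * ((m:ℂ) + r) * (m.choose r : ℂ) * ((m + (2*n-1) - r).choose (n - r) : ℂ)
        = ((m:ℂ)) * (((-1:ℂ))^r * (m.choose r : ℂ) * ((m + (2*n-1) - r).choose (n - r) : ℂ))
          + ((-1:ℂ))^r * (r:ℂ) * (m.choose r : ℂ) * ((m + (2*n-1) - r).choose (n - r) : ℂ) := by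
      intro r hr; ring
    have hS : ∑ r ∈ range (n+1),
        ((-1:ℂ))^r * ((m:ℂ) + r) * (m.choose r : ℂ) * ((m + (2*n-1) - r).choose (n - r) : ℂ) = 0 := by
      rw [Finset.sum_congr rfl hsplit, Finset.sum_add_distrib, ← Finset.mul_sum, lemV m n (2*n-1)]
      -- second sum
      have hsum2 : ∑ r ∈ range (n+1),
          ((-1:ℂ))^r * (r:ℂ) * (m.choose r : ℂ) * ((m + (2*n-1) - r).choose (n - r) : ℂ)
          = -(m:ℂ) * ((2*n-1).choose (n-1) : ℂ) := by
        rw [Finset.sum_range_succ']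
        have hterm2 : ∀ r ∈ range n,
            ((-1:ℂ))^(r+1) * ((r+1 : ℕ):ℂ) * (m.choose (r+1) : ℂ) * ((m + (2*n-1) - (r+1)).choose (n - (r+1)) : ℂ)
            = (-(m:ℂ)) * (((-1:ℂ))^r * ((m-1).choose r : ℂ) * (((m-1) + (2*n-1) - r).choose ((n-1) - r) : ℂ)) := by
          intro r hr
          have hmc : (m:ℕ) * (m-1).choose r = m.choose (r+1) * (r+1) := by
            have h' := Nat.add_one_mul_choose_eq (m-1) r
            rwa [show m-1+1 = m by omega] at h'
          have e4 : m + (2*n-1) - (r+1) = (m-1) + (2*n-1) - r := by omega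
          have e5 : n - (r+1) = (n-1) - r := by omega
          rw [e4, e5]
          have hcc : ((m:ℂ)) * ((m-1).choose r : ℂ) = (m.choose (r+1) : ℂ) * ((r:ℂ)+1) := by
            exact_mod_cast congrArg (Nat.cast : ℕ → ℂ) hmc
          push_cast
          push_cast at hcc
          linear_combination (((-1:ℂ))^r * (((m-1) + (2*n-1) - r).choose ((n-1) - r) : ℂ)) * hcc
        rw [Finset.sum_congr rfl hterm2, ← Finset.mul_sum]
        have hV := lemV (m-1) (n-1) (2*n-1)
        rw [show (n-1)+1 = n by omega] at hV
        rw [hV]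
        simp
      rw [hsum2]
      have hsymm : ((2*n-1).choose (n-1) : ℕ) = (2*n-1).choose n := by
        have := Nat.choose_symm (show n ≤ 2*n-1 by omega)
        rwa [show 2*n-1-n = n-1 by omega] at this
      rw [hsymm]
      ring
    rw [hS, mul_zero]

lemma lemA (h : ℂ → ℂ) (hh : Differentiable ℂ h) :
    ∀ j : ℕ, ∀ t : ℂ, t ≠ 0 →
      iteratedDeriv j (fun u => h (u ^ 2)) t
        = ∑ m ∈ range (j+1), Ac j m * t ^ ((2*(m:ℤ)) - (j:ℤ)) * iteratedDeriv m h (t^2) := by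
  have hd : ∀ m : ℕ, Differentiable ℂ (iteratedDeriv m h) := fun m =>
    (hh.contDiff (n := (m+1 : ℕ))).differentiable_iteratedDeriv m (by exact_mod_cast lt_add_one m)
  intro j
  induction j with
  | zero =>
    intro t ht
    simp [Ac, iteratedDeriv_zero]
  | succ j ih =>
    intro t ht
    rw [iteratedDeriv_succ]
    -- replace the function by the sum near t
    have hne : ∀ᶠ u in nhds t, u ≠ 0 := eventually_ne_nhds ht
    have heq : iteratedDeriv j (fun u => h (u ^ 2)) =ᶠ[nhds t]
        (fun u => ∑ m ∈ range (j+1), Ac j m * u ^ ((2*(m:ℤ)) - (j:ℤ)) * iteratedDeriv m h (u^2)) :=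
      hne.mono (fun u hu => ih u hu)
    rw [heq.deriv_eq]
    -- differentiate the sum
    have hder : HasDerivAt
        (fun u : ℂ => ∑ m ∈ range (j+1), Ac j m * u ^ ((2*(m:ℤ)) - (j:ℤ)) * iteratedDeriv m h (u^2))
        (∑ m ∈ range (j+1),
          (Ac j m * (((2*(m:ℤ) - (j:ℤ) : ℤ) : ℂ) * t ^ ((2*(m:ℤ)) - (j:ℤ) - 1)) * iteratedDeriv m h (t^2)
            + Ac j m * t ^ ((2*(m:ℤ)) - (j:ℤ)) * (iteratedDeriv (m+1) h (t^2) * (2*t)))) t := by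
      apply HasDerivAt.fun_sum
      intro m _
      have h1 : HasDerivAt (fun u : ℂ => u ^ ((2*(m:ℤ)) - (j:ℤ)))
          (((2*(m:ℤ) - (j:ℤ) : ℤ) : ℂ) * t ^ ((2*(m:ℤ)) - (j:ℤ) - 1)) t :=
        hasDerivAt_zpow _ t (Or.inl ht)
      have h2 : HasDerivAt (fun u : ℂ => iteratedDeriv m h (u^2))
          (iteratedDeriv (m+1) h (t^2) * (2*t)) t := by
        have hsq : HasDerivAt (fun u : ℂ => u^2) (2*t) t := by
          simpa using hasDerivAt_pow 2 t
        have hH : HasDerivAt (iteratedDeriv m h) (iteratedDeriv (m+1) h (t^2)) (t^2) := by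
          rw [iteratedDeriv_succ]
          exact ((hd m) (t^2)).hasDerivAt
        exact hH.comp t hsq
      simpa [mul_assoc, mul_comm, mul_left_comm] using ((h1.const_mul (Ac j m)).fun_mul h2)
    rw [hder.deriv]
    -- now the combinatorial rearrangement
    rw [Finset.sum_range_succ' (fun m => Ac (j+1) m * t ^ ((2*(m:ℤ)) - (((j+1):ℕ):ℤ)) * iteratedDeriv m h (t^2)) (j+1)]
    set T : ℕ → ℂ := fun m => Ac j m * (((2*(m:ℤ) - (j:ℤ) : ℤ) : ℂ) * t ^ ((2*(m:ℤ)) - (j:ℤ) - 1)) * iteratedDeriv m h (t^2) with hT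
    set S : ℕ → ℂ := fun m => Ac j m * t ^ ((2*(m:ℤ)) - (j:ℤ)) * (iteratedDeriv (m+1) h (t^2) * (2*t)) with hS
    have hT0 : T 0 = 0 := by
      rcases Nat.eq_zero_or_pos j with rfl | hj
      · simp [hT]
      · simp [hT, Ac_zero j hj]
    have hTtop : T (j+1) = 0 := by
      simp [hT, Ac_gt j (j+1) (lt_add_one j)]
    have hshift : ∑ m ∈ range (j+1), T (m+1) = ∑ m ∈ range (j+1), T m := by
      have e1 := Finset.sum_range_succ' T (j+1)
      have e2 := Finset.sum_range_succ T (j+1)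
      rw [hT0] at e1
      rw [hTtop] at e2
      rw [add_zero] at e1 e2
      rw [← e1, e2]
    have hF0 : Ac (j+1) 0 * t ^ ((2*((0:ℕ):ℤ)) - (((j+1):ℕ):ℤ)) * iteratedDeriv 0 h (t^2) = 0 := by
      rw [Ac_zero (j+1) (by omega)]
      ring
    have hterm : ∀ m ∈ range (j+1),
        Ac (j+1) (m+1) * t ^ ((2*(((m+1):ℕ):ℤ)) - (((j+1):ℕ):ℤ)) * iteratedDeriv (m+1) h (t^2)
          = T (m+1) + S m := by
      intro m hm
      have hmj : m ≤ j := by simpa [Nat.lt_succ_iff] using hm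
      rw [Ac_rec j m hmj]
      have ht1 : t ^ ((2*(((m+1):ℕ):ℤ)) - (((j+1):ℕ):ℤ)) = t ^ ((2*((m:ℕ):ℤ)) - ((j:ℕ):ℤ)) * t := by
        rw [← zpow_add_one₀ ht]
        congr 1
        push_cast
        ring
      have ht2 : t ^ ((2*(((m+1):ℕ):ℤ)) - ((j:ℕ):ℤ) - 1) = t ^ ((2*((m:ℕ):ℤ)) - ((j:ℕ):ℤ)) * t := by
        rw [← zpow_add_one₀ ht]
        congr 1
        push_cast
        ring
      simp only [hT, hS]
      rw [ht1, ht2]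
      push_cast
      ring
    calc ∑ m ∈ range (j+1), (T m + S m)
        = (∑ m ∈ range (j+1), T m) + ∑ m ∈ range (j+1), S m := Finset.sum_add_distrib
      _ = (∑ m ∈ range (j+1), T (m+1)) + ∑ m ∈ range (j+1), S m := by rw [hshift]
      _ = ∑ m ∈ range (j+1), (T (m+1) + S m) := Finset.sum_add_distrib.symm
      _ = ∑ m ∈ range (j+1),
            Ac (j+1) (m+1) * t ^ ((2*(((m+1):ℕ):ℤ)) - (((j+1):ℕ):ℤ)) * iteratedDeriv (m+1) h (t^2) :=
          (Finset.sum_congr rfl hterm).symm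
      _ = (∑ m ∈ range (j+1),
            Ac (j+1) (m+1) * t ^ ((2*(((m+1):ℕ):ℤ)) - (((j+1):ℕ):ℤ)) * iteratedDeriv (m+1) h (t^2))
          + Ac (j+1) 0 * t ^ ((2*((0:ℕ):ℤ)) - (((j+1):ℕ):ℤ)) * iteratedDeriv 0 h (t^2) := by
          rw [hF0, add_zero]

lemma key2 (b : ℂ) (hb : b ≠ 0) (k m : ℕ) (hk : 1 ≤ k) (hmk : m ≤ k) :
    ∑ j ∈ Icc 1 k, ((-1) ^ (k - j) * (j : ℂ) * ((2 * k - j - 1).factorial : ℂ) /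
            ((2 * b) ^ (2 * k - j) * (k.factorial : ℂ) * ((k - j).factorial : ℂ)))
          * (Ac j m * b ^ ((2*(m:ℤ)) - (j:ℤ)) / (j.factorial : ℂ))
      = if m = k then ((k.factorial : ℂ))⁻¹ else 0 := by
  have h2b : (2*b : ℂ) ≠ 0 := by
    simp [hb]
  rcases Nat.eq_zero_or_pos m with rfl | hm
  · rw [if_neg (by omega)]
    apply Finset.sum_eq_zero
    intro j hj
    rw [Ac_zero j (by simp at hj; omega)]
    ring
  · have hsub : ∑ j ∈ Icc 1 k, ((-1) ^ (k - j) * (j : ℂ) * ((2 * k - j - 1).factorial : ℂ) /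
            ((2 * b) ^ (2 * k - j) * (k.factorial : ℂ) * ((k - j).factorial : ℂ)))
          * (Ac j m * b ^ ((2*(m:ℤ)) - (j:ℤ)) / (j.factorial : ℂ))
        = ∑ j ∈ Icc m k, ((-1) ^ (k - j) * (j : ℂ) * ((2 * k - j - 1).factorial : ℂ) /
            ((2 * b) ^ (2 * k - j) * (k.factorial : ℂ) * ((k - j).factorial : ℂ)))
          * (Ac j m * b ^ ((2*(m:ℤ)) - (j:ℤ)) / (j.factorial : ℂ)) := by
      apply (Finset.sum_subset (Finset.Icc_subset_Icc (by omega) le_rfl) _).symm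
      intro j hj hj2
      have : j < m := by
        simp only [Finset.mem_Icc] at hj hj2
        omega
      rw [Ac_gt j m this]
      ring
    rw [hsub]
    have hterm : ∀ j ∈ Icc m k,
        ((-1) ^ (k - j) * (j : ℂ) * ((2 * k - j - 1).factorial : ℂ) /
            ((2 * b) ^ (2 * k - j) * (k.factorial : ℂ) * ((k - j).factorial : ℂ)))
          * (Ac j m * b ^ ((2*(m:ℤ)) - (j:ℤ)) / (j.factorial : ℂ))
        = ((2*b) ^ (2*(m:ℤ) - 2*(k:ℤ)) / ((k.factorial : ℂ) * (m.factorial : ℂ))) *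
            (((-1:ℂ))^(k-j) * (j:ℂ) * ((2*k-j-1).factorial : ℂ) * ((m.choose (j-m)) : ℂ)
              / ((k-j).factorial : ℂ)) := by
      intro j hj
      simp only [Finset.mem_Icc] at hj
      obtain ⟨hmj, hjk⟩ := hj
      simp only [Ac, if_pos hmj]
      have hq : ((2*b):ℂ) ^ (2*k - j) = (2*b) ^ (2*(k:ℤ)-(j:ℤ)) := by
        rw [← zpow_natCast]
        congr 1
        omega
      have hcomb : (2:ℂ)^(2*(m:ℤ)-(j:ℤ)) * b^(2*(m:ℤ)-(j:ℤ))
          = (2*b)^(2*(m:ℤ)-2*(k:ℤ)) * (2*b)^(2*(k:ℤ)-(j:ℤ)) := by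
        rw [← mul_zpow, ← zpow_add₀ h2b,
          show (2*(m:ℤ)-2*(k:ℤ)) + (2*(k:ℤ)-(j:ℤ)) = 2*(m:ℤ)-(j:ℤ) by ring]
      have hfk : ((k.factorial : ℕ):ℂ) ≠ 0 := by exact_mod_cast k.factorial_ne_zero
      have hfm : ((m.factorial : ℕ):ℂ) ≠ 0 := by exact_mod_cast m.factorial_ne_zero
      have hfj : ((j.factorial : ℕ):ℂ) ≠ 0 := by exact_mod_cast j.factorial_ne_zero
      have hfkj : (((k-j).factorial : ℕ):ℂ) ≠ 0 := by exact_mod_cast (k-j).factorial_ne_zero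
      have hzX : ((2*b):ℂ) ^ (2*(k:ℤ)-(j:ℤ)) ≠ 0 := zpow_ne_zero _ h2b
      have hzY : ((2*b):ℂ) ^ (2*(m:ℤ)-2*(k:ℤ)) ≠ 0 := zpow_ne_zero _ h2b
      have h2z : (2:ℂ)^(2*(m:ℤ)-(j:ℤ)) ≠ 0 := zpow_ne_zero _ two_ne_zero
      have hb' : b^(2*(m:ℤ)-(j:ℤ)) = (2*b)^(2*(m:ℤ)-2*(k:ℤ)) * (2*b)^(2*(k:ℤ)-(j:ℤ)) / (2:ℂ)^(2*(m:ℤ)-(j:ℤ)) := by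
        rw [← hcomb]; field_simp
      rw [hq, hb']
      field_simp
    rw [Finset.sum_congr rfl hterm, ← Finset.mul_sum, key1 k m hm hmk]
    rcases eq_or_ne m k with rfl | hne
    · rw [if_pos rfl, if_pos rfl, show 2*(m:ℤ) - 2*(m:ℤ) = 0 by ring, zpow_zero]
      have hfk : ((m.factorial : ℕ):ℂ) ≠ 0 := by exact_mod_cast m.factorial_ne_zero
      field_simp
    · rw [if_neg hne, if_neg hne, mul_zero]


/-- For an even analytic function `f(t) = h(t²)`, the Taylor coefficients `γ_k` of `h` at `b²`
are finite linear combinations of the Taylor coefficients of `f` at `b` (formula (a10)). -/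
theorem even_part_coefficients
    (b : ℂ) (hb : b ≠ 0) (h : ℂ → ℂ) (hh : Differentiable ℂ h) :
    (∀ k : ℕ, 1 ≤ k →
      iteratedDeriv k h (b ^ 2) / (k.factorial : ℂ) =
        ∑ j ∈ Icc 1 k,
          ((-1) ^ (k - j) * (j : ℂ) * ((2 * k - j - 1).factorial : ℂ) /
            ((2 * b) ^ (2 * k - j) * (k.factorial : ℂ) * ((k - j).factorial : ℂ))) *
          (iteratedDeriv j (fun t => h (t ^ 2)) b / (j.factorial : ℂ))) ∧
    h (b ^ 2) = (fun t => h (t ^ 2)) b := by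
  constructor
  · intro k hk
    have hstep1 : ∀ j ∈ Icc 1 k,
        ((-1) ^ (k - j) * (j : ℂ) * ((2 * k - j - 1).factorial : ℂ) /
            ((2 * b) ^ (2 * k - j) * (k.factorial : ℂ) * ((k - j).factorial : ℂ))) *
          (iteratedDeriv j (fun t => h (t ^ 2)) b / (j.factorial : ℂ))
        = ∑ m ∈ range (k+1),
            ((-1) ^ (k - j) * (j : ℂ) * ((2 * k - j - 1).factorial : ℂ) /
              ((2 * b) ^ (2 * k - j) * (k.factorial : ℂ) * ((k - j).factorial : ℂ))) *
            (Ac j m * b ^ ((2*(m:ℤ)) - (j:ℤ)) / (j.factorial : ℂ)) * iteratedDeriv m h (b^2) := by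
      intro j hj
      simp only [Finset.mem_Icc] at hj
      rw [lemA h hh j b hb]
      rw [Finset.sum_subset (Finset.range_subset_range.mpr (by omega : j + 1 ≤ k + 1))
        (by
          intro m _ hm2
          rw [Ac_gt j m (by simp only [Finset.mem_range] at hm2; omega)]
          ring)]
      rw [Finset.sum_div, Finset.mul_sum]
      apply Finset.sum_congr rfl
      intro m _
      ring
    rw [Finset.sum_congr rfl hstep1, Finset.sum_comm]
    have hfin : ∀ m ∈ range (k+1),
        (∑ j ∈ Icc 1 k,
          ((-1) ^ (k - j) * (j : ℂ) * ((2 * k - j - 1).factorial : ℂ) /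
            ((2 * b) ^ (2 * k - j) * (k.factorial : ℂ) * ((k - j).factorial : ℂ))) *
          (Ac j m * b ^ ((2*(m:ℤ)) - (j:ℤ)) / (j.factorial : ℂ)) * iteratedDeriv m h (b^2))
        = if m = k then ((k.factorial : ℂ))⁻¹ * iteratedDeriv k h (b^2) else 0 := by
      intro m hm
      rw [← Finset.sum_mul, key2 b hb k m hk (by simp only [Finset.mem_range] at hm; omega)]
      rcases eq_or_ne m k with rfl | hne
      · rw [if_pos rfl, if_pos rfl]
      · rw [if_neg hne, if_neg hne, zero_mul]
    rw [Finset.sum_congr rfl hfin, Finset.sum_ite_eq' (range (k+1)) k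
      (fun _ => ((k.factorial : ℂ))⁻¹ * iteratedDeriv k h (b^2)),
      if_pos (Finset.self_mem_range_succ k)]
    ring
  · rfl
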